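/- arXiv:1008.5342 — 2 statements merged into one kernel-verified Lean document; each statement's English description precedes it below -/
import Mathlib

section
/- Let c_n be defined by the reciprocal power series (Σ_{n≥0} a_n t^n)^{-1} = Σ_{n≥0} c_n t^n where a_n = 1/(n+1) are the kernel coefficients of the Dirichlet space with norm ‖Σb_n z^n‖² = Σ(n+1)|b_n|². Then c_0 > 0 and c_n ≤ 0 for all n ≥ 1. -/
open PowerSeries Finset

private noncomputable def Aa : PowerSeries ℝ := PowerSeries.mk fun n : ℕ => (1 : ℝ) / (n + 1)

private lemma constA : PowerSeries.constantCoeff (R := ℝ) Aa = 1 := by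
  simp [Aa]

private lemma cA (k : ℕ) : PowerSeries.coeff (R := ℝ) k Aa = 1 / ((k : ℝ) + 1) :=
  PowerSeries.coeff_mk k _

private lemma c0A : PowerSeries.coeff (R := ℝ) 0 Aa⁻¹ = 1 := by
  rw [PowerSeries.coeff_zero_eq_constantCoeff, PowerSeries.constantCoeff_inv, constA]
  norm_num

private lemma recA (n : ℕ) (hn : 1 ≤ n) :
    ∑ j ∈ range (n + 1), (1 : ℝ) / ((j : ℝ) + 1) * PowerSeries.coeff (R := ℝ) (n - j) Aa⁻¹ = 0 := by
  have h : Aa * Aa⁻¹ = 1 := PowerSeries.mul_inv_cancel _ (by rw [constA]; norm_num)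
  have h2 := congrArg (PowerSeries.coeff (R := ℝ) n) h
  rw [PowerSeries.coeff_mul, Finset.Nat.sum_antidiagonal_eq_sum_range_succ_mk,
    PowerSeries.coeff_one, if_neg (by omega)] at h2
  simp only [cA] at h2
  exact h2

private lemma mainA : ∀ n : ℕ, 1 ≤ n → PowerSeries.coeff (R := ℝ) n Aa⁻¹ ≤ 0 := by
  intro n
  induction n using Nat.strong_induction_on with
  | _ n ih =>
    intro hn
    rcases Nat.lt_or_ge n 2 with h2 | h2
    · -- n = 1
      interval_cases n
      have h := recA 1 (by norm_num)
      simp [Finset.sum_range_succ, c0A] at h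
      linarith
    · obtain ⟨m, rfl⟩ : ∃ m, n = m + 2 := ⟨n - 2, by omega⟩
      have h1 := recA (m + 1) (by omega)
      have h2 := recA (m + 2) (by omega)
      rw [Finset.sum_range_succ'] at h2
      -- normalize indices in h2
      have hidx : ∀ i ∈ range (m + 2),
          (1 : ℝ) / (((i + 1 : ℕ) : ℝ) + 1) * PowerSeries.coeff (R := ℝ) (m + 2 - (i + 1)) Aa⁻¹
            = (1 : ℝ) / ((i : ℝ) + 2) * PowerSeries.coeff (R := ℝ) (m + 1 - i) Aa⁻¹ := by
        intro i hi
        have e1 : m + 2 - (i + 1) = m + 1 - i := by omega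
        rw [e1]
        push_cast
        ring
      rw [Finset.sum_congr rfl hidx] at h2
      simp only [Nat.cast_zero, Nat.sub_zero, zero_add, div_one, one_mul] at h2
      -- h2 : ∑ i in range (m+2), 1/(i+2) * c (m+1-i) + c (m+2) = 0
      have key : PowerSeries.coeff (R := ℝ) (m + 2) Aa⁻¹ =
          ∑ i ∈ range (m + 2),
            (((m : ℝ) + 2) / ((m : ℝ) + 3) * (1 / ((i : ℝ) + 1)) - 1 / ((i : ℝ) + 2)) *
              PowerSeries.coeff (R := ℝ) (m + 1 - i) Aa⁻¹ := by
        have e : ∑ i ∈ range (m + 2),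
              (((m : ℝ) + 2) / ((m : ℝ) + 3) * (1 / ((i : ℝ) + 1)) - 1 / ((i : ℝ) + 2)) *
                PowerSeries.coeff (R := ℝ) (m + 1 - i) Aa⁻¹
            = ((m : ℝ) + 2) / ((m : ℝ) + 3) *
                ∑ i ∈ range (m + 2), (1 : ℝ) / ((i : ℝ) + 1) *
                  PowerSeries.coeff (R := ℝ) (m + 1 - i) Aa⁻¹
              - ∑ i ∈ range (m + 2), (1 : ℝ) / ((i : ℝ) + 2) *
                  PowerSeries.coeff (R := ℝ) (m + 1 - i) Aa⁻¹ := by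
          rw [Finset.mul_sum, ← Finset.sum_sub_distrib]
          exact Finset.sum_congr rfl fun i _ => by ring
        have h1' : ∑ i ∈ range (m + 2), (1 : ℝ) / ((i : ℝ) + 1) *
            PowerSeries.coeff (R := ℝ) (m + 1 - i) Aa⁻¹ = 0 := h1
        rw [e, h1', mul_zero, zero_sub]
        linarith
      rw [key]
      apply Finset.sum_nonpos
      intro i hi
      rw [Finset.mem_range] at hi
      rcases Nat.lt_or_ge i (m + 1) with him | him
      · -- i ≤ m : coefficient nonneg, c (m+1-i) ≤ 0
        have hcast : (i : ℝ) ≤ (m : ℝ) := by exact_mod_cast Nat.lt_succ_iff.mp him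
        have hcoef : (0 : ℝ) ≤ ((m : ℝ) + 2) / ((m : ℝ) + 3) * (1 / ((i : ℝ) + 1))
            - 1 / ((i : ℝ) + 2) := by
          rw [sub_nonneg, div_mul_div_comm, div_le_div_iff₀ (by positivity) (by positivity)]
          nlinarith
        have hc : PowerSeries.coeff (R := ℝ) (m + 1 - i) Aa⁻¹ ≤ 0 :=
          ih (m + 1 - i) (by omega) (by omega)
        exact mul_nonpos_of_nonneg_of_nonpos hcoef hc
      · -- i = m + 1 : coefficient is zero
        have : i = m + 1 := by omega
        subst this
        have : ((m : ℝ) + 2) / ((m : ℝ) + 3) * (1 / (((m : ℕ) + 1 : ℝ) + 1))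
            - 1 / (((m : ℕ) + 1 : ℝ) + 2) = 0 := by
          push_cast
          field_simp
          ring
        push_cast
        push_cast at this
        rw [this, zero_mul]

/-- The coefficients of the reciprocal of the power series `Σ_{n≥0} t^n/(n+1)`
(the kernel coefficients of the Dirichlet space with norm `Σ (n+1)|b_n|²`)
satisfy `c_0 > 0` and `c_n ≤ 0` for `n ≥ 1`: the Complete Nevanlinna–Pick
property of the Dirichlet space. -/
theorem dirichlet_CNPP_coefficients :
    0 < PowerSeries.coeff (R := ℝ) 0 (PowerSeries.mk fun n : ℕ => (1 : ℝ) / (n + 1))⁻¹ ∧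
    ∀ n : ℕ, 1 ≤ n →
      PowerSeries.coeff (R := ℝ) n (PowerSeries.mk fun n : ℕ => (1 : ℝ) / (n + 1))⁻¹ ≤ 0 := by
  constructor
  · have := c0A
    rw [Aa] at this
    rw [this]
    norm_num
  · intro n hn
    have := mainA n hn
    rwa [Aa] at this
end

section
/- The coefficients c_n of the reciprocal power series of Σ_{n≥0} a_n t^n with a_0 = 1, a_n = n for n ≥ 1 (the kernel coefficients of the norm |||f|||² = |b_0|² + Σ_{n≥1} n|b_n|²) do NOT all satisfy c_n ≤ 0 for n ≥ 1; i.e., there exists n ≥ 1 with c_n > 0. -/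
open PowerSeries Finset

private noncomputable def M : ℝ⟦X⟧ := PowerSeries.mk fun n : ℕ => if n = 0 then (1 : ℝ) else n

private lemma coeffM (n : ℕ) : coeff (R := ℝ) n M = if n = 0 then (1 : ℝ) else n := by
  simp [M]

private lemma hc0 : constantCoeff (R := ℝ) M = 1 := by
  rw [← coeff_zero_eq_constantCoeff_apply, coeffM]; simp

private lemma cstep (n : ℕ) (hn : n ≠ 0) :
    coeff (R := ℝ) n M⁻¹ = -∑ x ∈ antidiagonal n,
        if x.2 < n then coeff (R := ℝ) x.1 M * coeff (R := ℝ) x.2 M⁻¹ else 0 := by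
  rw [PowerSeries.coeff_inv, if_neg hn, hc0]; ring

private lemma c1 : coeff (R := ℝ) 1 M⁻¹ = -1 := by
  rw [cstep 1 one_ne_zero]
  simp [Finset.Nat.sum_antidiagonal_eq_sum_range_succ_mk, Finset.sum_range_succ, coeffM, hc0]

private lemma c2 : coeff (R := ℝ) 2 M⁻¹ = -1 := by
  rw [cstep 2 (by norm_num)]
  simp [Finset.Nat.sum_antidiagonal_eq_sum_range_succ_mk, Finset.sum_range_succ, coeffM, hc0, c1]
  norm_num

private lemma c3 : coeff (R := ℝ) 3 M⁻¹ = 0 := by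
  rw [cstep 3 (by norm_num)]
  simp [Finset.Nat.sum_antidiagonal_eq_sum_range_succ_mk, Finset.sum_range_succ, coeffM, hc0, c1, c2]
  norm_num

private lemma c4 : coeff (R := ℝ) 4 M⁻¹ = 1 := by
  rw [cstep 4 (by norm_num)]
  simp [Finset.Nat.sum_antidiagonal_eq_sum_range_succ_mk, Finset.sum_range_succ, coeffM, hc0, c1, c2, c3]
  norm_num

/-- The renorming `|||f|||² = |b_0|² + Σ_{n≥1} n |b_n|²` of the Dirichlet space fails
the Complete Nevanlinna–Pick property: some coefficient `c_n`, `n ≥ 1`, of the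
reciprocal of the power series `1 + Σ_{n≥1} n t^n` is strictly positive. -/
theorem dirichlet_renorm_fails_CNPP :
    ∃ n : ℕ, 1 ≤ n ∧
      0 < PowerSeries.coeff (R := ℝ) n
        (PowerSeries.mk fun n : ℕ => if n = 0 then (1 : ℝ) else n)⁻¹ := by
  exact ⟨4, by norm_num, by rw [show (PowerSeries.mk fun n : ℕ => if n = 0 then (1 : ℝ) else n) = M from rfl, c4]; norm_num⟩
end
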